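/- Let a be a positive integer and b an integer with gcd(a, b) = 1. Define s(a; b) := (1/(4a)) · Σ_{k=1}^{a−1} cot(πk/a) · cot(πbk/a). Then s(a; b) = 0 if and only if a divides b² + 1. -/

import Mathlib

open Real Finset

/-- The Dedekind sum in cotangent form
`s(a; b) = (1/(4a)) · Σ_{k=1}^{a−1} cot(πk/a) · cot(πbk/a)`. -/
noncomputable def dedekindSum (a : ℕ) (b : ℤ) : ℝ :=
  (1 / (4 * (a : ℝ))) * ∑ k ∈ Finset.Ico 1 a,
    Real.cot (Real.pi * k / a) * Real.cot (Real.pi * b * k / a)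


lemma rootsum_zero {z : ℂ} (hz : z ≠ 1) {n : ℕ} (hzn : z ^ n = 1) :
    ∑ j ∈ Finset.range n, z ^ j = 0 := by
  rw [geom_sum_eq hz, hzn, sub_self, zero_div]

lemma wgeom (z : ℂ) (n : ℕ) :
    (z - 1) * ∑ j ∈ Finset.range n, (j : ℂ) * z ^ j
      = ((n : ℂ) - 1) * z ^ n - ∑ j ∈ Finset.range n, z ^ j + 1 := by
  induction n with
  | zero => simp
  | succ n ih =>
    rw [Finset.sum_range_succ, Finset.sum_range_succ, mul_add, ih]
    push_cast
    ring

lemma wgeom_root {z : ℂ} (hz : z ≠ 1) {n : ℕ} (hzn : z ^ n = 1) :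
    (z - 1) * ∑ j ∈ Finset.range n, (j : ℂ) * z ^ j = n := by
  rw [wgeom, hzn, rootsum_zero hz hzn]; ring

lemma zpow_eq (θ : ℝ) (j : ℕ) :
    Complex.exp (2 * (θ:ℂ) * Complex.I) ^ j
      = Complex.exp ((2 * j * θ : ℝ) * Complex.I) := by
  rw [← Complex.exp_nat_mul]
  push_cast
  ring_nf

lemma sin_sum_zero {θ : ℝ} (hz : Complex.exp (2 * (θ:ℂ) * Complex.I) ≠ 1)
    {n : ℕ} (hzn : Complex.exp (2 * (θ:ℂ) * Complex.I) ^ n = 1) :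
    ∑ j ∈ Finset.range n, Real.sin (2 * j * θ) = 0 := by
  have h := rootsum_zero hz hzn
  have him := congrArg Complex.im h
  rw [Complex.im_sum] at him
  simp only [zpow_eq, Complex.exp_ofReal_mul_I_im, Complex.zero_im] at him
  exact him

lemma hfac (θ : ℝ) : Complex.exp (2 * (θ:ℂ) * Complex.I) - 1
    = Complex.exp ((θ:ℂ) * Complex.I) * (2 * (Real.sin θ : ℂ) * Complex.I) := by
  rw [Complex.exp_mul_I, Complex.exp_mul_I]
  push_cast [Complex.ofReal_sin]
  have py := Complex.sin_sq_add_cos_sq (θ:ℂ)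
  have s2 := Complex.sin_two_mul (θ:ℂ)
  have c2 := Complex.cos_two_mul (θ:ℂ)
  linear_combination c2 + Complex.I * s2 + 2 * py - 2 * Complex.sin (θ:ℂ)^2 * Complex.I_sq

lemma sin_wsum {θ : ℝ} (hz : Complex.exp (2 * (θ:ℂ) * Complex.I) ≠ 1)
    {n : ℕ} (hzn : Complex.exp (2 * (θ:ℂ) * Complex.I) ^ n = 1) :
    2 * Real.sin θ * ∑ j ∈ Finset.range n, (j : ℝ) * Real.sin (2 * j * θ)
      = -(n * Real.cos θ) := by
  set z := Complex.exp (2 * (θ:ℂ) * Complex.I) with hzdef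
  set S := ∑ j ∈ Finset.range n, (j:ℂ) * z ^ j with hSdef
  have h := wgeom_root hz hzn
  have hexp : ((Real.sin θ : ℂ) + (Real.cos θ : ℂ) * Complex.I)
      = Complex.I * Complex.exp ((-θ : ℝ) * Complex.I) := by
    rw [Complex.exp_mul_I]
    push_cast [Complex.ofReal_sin, Complex.ofReal_cos, Complex.sin_neg, Complex.cos_neg]
    linear_combination Complex.sin (θ:ℂ) * Complex.I_sq
  have key : (z - 1) * ((-(n:ℝ) : ℂ) * ((Real.sin θ : ℂ) + (Real.cos θ : ℂ) * Complex.I))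
      = (2 * Real.sin θ : ℂ) * n := by
    rw [hfac θ, hexp]
    rw [show Complex.exp ((θ:ℂ) * Complex.I) * (2 * (Real.sin θ:ℂ) * Complex.I) *
        ((-(n:ℝ) : ℂ) * (Complex.I * Complex.exp ((-θ:ℝ) * Complex.I)))
        = (Complex.exp ((θ:ℂ) * Complex.I) * Complex.exp ((-θ:ℝ) * Complex.I)) *
          (2 * (Real.sin θ:ℂ) * (-(n:ℝ):ℂ)) * Complex.I ^ 2 by ring]
    rw [← Complex.exp_add]
    have h0 : (θ:ℂ) * Complex.I + ((-θ:ℝ):ℂ) * Complex.I = 0 := by push_cast; ring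
    rw [h0, Complex.exp_zero, Complex.I_sq]
    push_cast
    ring
  have hS : (2 * Real.sin θ : ℂ) * S = (-(n:ℝ) : ℂ) * ((Real.sin θ : ℂ) + (Real.cos θ : ℂ) * Complex.I) := by
    have hne : z - 1 ≠ 0 := sub_ne_zero.mpr hz
    apply mul_left_cancel₀ hne
    rw [key, show (z-1) * ((2 * Real.sin θ : ℂ) * S) = (2 * Real.sin θ : ℂ) * ((z-1) * S) by ring, h]
  have him := congrArg Complex.im hS
  have hre : ((2 * Real.sin θ : ℝ) : ℂ) = (2 * Real.sin θ : ℂ) := by push_cast; ring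
  rw [← hre, Complex.im_ofReal_mul, hSdef, Complex.im_sum] at him
  have heq : ∀ j ∈ Finset.range n, ((j:ℂ) * z ^ j).im = (j:ℝ) * Real.sin (2*j*θ) := by
    intro j _
    rw [hzdef, zpow_eq]
    have : ((j:ℂ) * Complex.exp ((2*j*θ:ℝ) * Complex.I)).im
        = (j:ℝ) * (Complex.exp ((2*j*θ:ℝ) * Complex.I)).im := by
      rw [show ((j:ℂ)) = ((j:ℝ):ℂ) by push_cast; ring, Complex.im_ofReal_mul]
    rw [this, Complex.exp_ofReal_mul_I_im]
  rw [Finset.sum_congr rfl heq] at him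
  rw [him]
  simp [Complex.cos_ofReal_re]

section perm
variable {M : Type*} [AddCommMonoid M]

lemma emod_mem {a : ℕ} (ha : 0 < a) {b : ℤ} (hab : IsCoprime (a:ℤ) b)
    {k : ℕ} (hk : k ∈ Finset.Ico 1 a) : ((b * k) % (a:ℤ)).toNat ∈ Finset.Ico 1 a := by
  rw [Finset.mem_Ico] at hk ⊢
  have ha' : (0:ℤ) < a := by exact_mod_cast ha
  have h0 : 0 ≤ (b * k) % (a:ℤ) := Int.emod_nonneg _ (by positivity)
  have h1 : (b * k) % (a:ℤ) < a := Int.emod_lt_of_pos _ ha'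
  have hne : (b * k) % (a:ℤ) ≠ 0 := by
    intro h
    have hdvd : (a:ℤ) ∣ b * k := Int.dvd_of_emod_eq_zero h
    have : (a:ℤ) ∣ k := (IsCoprime.dvd_of_dvd_mul_left hab hdvd)
    have := Int.le_of_dvd (by exact_mod_cast hk.1) this
    omega
  constructor
  · omega
  · omega

/-- k ↦ (b*k) % a is a sum-preserving bijection of `Ico 1 a`. -/
lemma perm_sum {a : ℕ} (ha : 0 < a) {b : ℤ} (hab : IsCoprime (a:ℤ) b) (g : ℤ → M) :
    ∑ k ∈ Finset.Ico 1 a, g ((b * k) % (a:ℤ)) = ∑ k ∈ Finset.Ico 1 a, g k := by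
  obtain ⟨u, v, huv⟩ := hab
  have hab' : IsCoprime (a:ℤ) b := ⟨u, v, huv⟩
  have hav : IsCoprime (a:ℤ) v := ⟨u, b, by linarith [huv]⟩
  have ha' : (0:ℤ) < a := by exact_mod_cast ha
  have key : ∀ (c d : ℤ), c * d % (a:ℤ) = 1 % a → ∀ k ∈ Finset.Ico 1 a,
      ((c * ((d * k) % a)) % (a:ℤ)).toNat = k := by
    intro c d hcd k hk
    rw [Finset.mem_Ico] at hk
    have h1 : (c * ((d * k) % a)) % (a:ℤ) = (c * (d * k)) % a := by
      conv_lhs => rw [Int.mul_emod, Int.emod_emod_of_dvd (d*k) dvd_rfl]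
      conv_rhs => rw [Int.mul_emod]
    have h2 : (c * (d * k)) % (a:ℤ) = ((c * d) % a * k) % a := by
      conv_lhs => rw [← mul_assoc, Int.mul_emod]
      conv_rhs => rw [Int.mul_emod, Int.emod_emod_of_dvd (c*d) dvd_rfl]
    have h3 : ((c * d) % a * k) % (a:ℤ) = (1 % (a:ℤ) * k) % a := by rw [hcd]
    have h4 : (1 % (a:ℤ) * k) % a = (k:ℤ) % a := by
      conv_lhs => rw [Int.mul_emod, Int.emod_emod_of_dvd 1 dvd_rfl]
      conv_rhs => rw [← one_mul ((k:ℤ)), Int.mul_emod]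
    have h5 : (k : ℤ) % a = k := Int.emod_eq_of_lt (by positivity) (by exact_mod_cast hk.2)
    rw [h1, h2, h3, h4, h5]
    simp
  have hbv : b * v % (a:ℤ) = 1 % a := by
    have h : b * v = 1 + (a:ℤ) * (-u) := by linarith
    rw [h, Int.add_mul_emod_self_left]
  have hvb : v * b % (a:ℤ) = 1 % a := by rwa [mul_comm]
  refine Finset.sum_nbij' (fun k => ((b * k) % (a:ℤ)).toNat)
    (fun k => ((v * k) % (a:ℤ)).toNat) (fun k hk => emod_mem ha hab' hk)
    (fun k hk => emod_mem ha hav hk) ?_ ?_ ?_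
  · intro k hk
    have h0 : 0 ≤ (b * k) % (a:ℤ) := Int.emod_nonneg _ (by positivity)
    have := key v b hvb k hk
    rwa [Int.toNat_of_nonneg h0]
  · intro k hk
    have h0 : 0 ≤ (v * k) % (a:ℤ) := Int.emod_nonneg _ (by positivity)
    have := key b v hbv k hk
    rwa [Int.toNat_of_nonneg h0]
  · intro k hk
    have h0 : 0 ≤ (b * k) % (a:ℤ) := Int.emod_nonneg _ (by positivity)
    rw [Int.toNat_of_nonneg h0]

end perm

-- sum of squares
lemma six_sq_sum (a : ℕ) : 6 * ∑ k ∈ Finset.Ico 1 a, (k:ℤ)^2 = a * (a-1) * (2*a-1) := by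
  induction a with
  | zero => simp
  | succ n ih =>
    rcases Nat.eq_zero_or_pos n with h | h
    · subst h; simp
    · rw [Finset.sum_Ico_succ_top (by omega)]
      push_cast
      push_cast at ih
      ring_nf
      ring_nf at ih
      linarith

lemma two_id_sum (a : ℕ) : 2 * ∑ k ∈ Finset.Ico 1 a, (k:ℤ) = a * (a-1) := by
  induction a with
  | zero => simp
  | succ n ih =>
    rcases Nat.eq_zero_or_pos n with h | h
    · subst h; simp
    · rw [Finset.sum_Ico_succ_top (by omega)]
      push_cast
      push_cast at ih
      ring_nf
      ring_nf at ih
      linarith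

section analytic
variable {a : ℕ}

lemma exp_pow_eq_one (ha : 0 < a) (m : ℤ) :
    Complex.exp (2 * ((π * m / a : ℝ):ℂ) * Complex.I) ^ a = 1 := by
  rw [zpow_eq]
  have haR : (a:ℝ) ≠ 0 := Nat.cast_ne_zero.mpr ha.ne'
  have harg : (2 * (a:ℝ) * (π * m / a) : ℝ) = (m:ℝ) * (2 * π) := by field_simp
  rw [harg]
  have : (((m:ℝ) * (2*π) : ℝ) : ℂ) * Complex.I = (m:ℂ) * (2 * π * Complex.I) := by
    push_cast; ring
  rw [this, Complex.exp_int_mul_two_pi_mul_I]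

lemma sin_theta_ne_zero (ha : 0 < a) {m : ℤ} (hm : ¬ (a:ℤ) ∣ m) :
    Real.sin (π * m / a) ≠ 0 := by
  have haR : (a:ℝ) ≠ 0 := Nat.cast_ne_zero.mpr ha.ne'
  rw [Real.sin_ne_zero_iff]
  intro n hn
  apply hm
  refine ⟨n, ?_⟩
  have h2 : (n:ℝ) * π * a = π * m := by rw [hn, div_mul_cancel₀ _ haR]
  have h2' : π * ((n:ℝ) * a) = π * ((m:ℝ)) := by linear_combination h2
  have h3 : (n:ℝ) * a = m := mul_left_cancel₀ Real.pi_ne_zero h2'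
  have : (m:ℝ) = (a:ℝ) * n := by linarith
  exact_mod_cast this

lemma exp_ne_one (ha : 0 < a) {m : ℤ} (hm : ¬ (a:ℤ) ∣ m) :
    Complex.exp (2 * ((π * m / a : ℝ):ℂ) * Complex.I) ≠ 1 := by
  intro h
  set θ : ℝ := π * m / a with hθ
  have harg : 2 * (θ:ℂ) * Complex.I = ((2*θ : ℝ):ℂ) * Complex.I := by push_cast; ring
  rw [harg] at h
  have hre := congrArg Complex.re h
  rw [Complex.exp_ofReal_mul_I_re, Complex.one_re] at hre
  have hsin := sin_theta_ne_zero ha hm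
  rw [← hθ] at hsin
  have hc2 : Real.cos (2*θ) = 1 - 2 * Real.sin θ ^ 2 := by
    have := Real.cos_sq_add_sin_sq θ
    have := Real.cos_two_mul' θ
    nlinarith
  have : Real.sin θ ^ 2 = 0 := by nlinarith
  exact hsin (by nlinarith [this])

/-- cotangent as a finite sine sum -/
lemma cotexp (ha : 0 < a) {m : ℤ} (hm : ¬ (a:ℤ) ∣ m) :
    (a:ℝ) * Real.cot (π * m / a)
      = ∑ j ∈ Finset.Ico 1 a, ((a:ℝ) - 2*j) * Real.sin (2 * π * j * m / a) := by
  set θ : ℝ := π * m / a with hθ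
  have hz := exp_ne_one ha hm
  have hzn := exp_pow_eq_one ha m
  rw [← hθ] at hz hzn
  have hsin := sin_theta_ne_zero ha hm
  rw [← hθ] at hsin
  have hA := sin_sum_zero hz hzn
  have hB := sin_wsum hz hzn
  -- rewrite target sin args
  have hargs : ∀ j ∈ Finset.Ico 1 a, ((a:ℝ) - 2*j) * Real.sin (2 * π * j * m / a)
      = ((a:ℝ) * Real.sin (2 * j * θ) - 2 * ((j:ℝ) * Real.sin (2 * j * θ))) := by
    intro j _
    have : (2 * π * j * m / a : ℝ) = 2 * j * θ := by rw [hθ]; ring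
    rw [this]; ring
  rw [Finset.sum_congr rfl hargs, Finset.sum_sub_distrib, ← Finset.mul_sum, ← Finset.mul_sum]
  -- extend Ico to range
  have hext : ∀ f : ℕ → ℝ, f 0 = 0 →
      ∑ j ∈ Finset.Ico 1 a, f j = ∑ j ∈ Finset.range a, f j := by
    intro f hf
    rw [Finset.range_eq_Ico, Finset.sum_eq_sum_Ico_succ_bot ha, hf, zero_add]
  rw [hext (fun j => Real.sin (2 * j * θ)) (by simp),
      hext (fun j => (j:ℝ) * Real.sin (2 * j * θ)) (by simp)]
  rw [hA, Real.cot_eq_cos_div_sin]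
  field_simp
  linear_combination hB

/-- full cosine orthogonality sum -/
lemma cos_sum (ha : 0 < a) (m : ℤ) :
    ∑ k ∈ Finset.range a, Real.cos (2 * π * m * k / a)
      = if (a:ℤ) ∣ m then (a:ℝ) else 0 := by
  have haR : (a:ℝ) ≠ 0 := Nat.cast_ne_zero.mpr ha.ne'
  by_cases hdvd : (a:ℤ) ∣ m
  · obtain ⟨c, hc⟩ := hdvd
    rw [if_pos ⟨c, hc⟩]
    have : ∀ k ∈ Finset.range a, Real.cos (2 * π * m * k / a) = 1 := by
      intro k _
      have harg : (2 * π * m * k / a : ℝ) = ((c * k : ℤ):ℝ) * (2 * π) := by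
        rw [hc]; push_cast; field_simp
      rw [harg, Real.cos_int_mul_two_pi]
    rw [Finset.sum_congr rfl this, Finset.sum_const, Finset.card_range]
    simp
  · rw [if_neg hdvd]
    have hz := exp_ne_one ha hdvd
    have hzn := exp_pow_eq_one ha m
    have h := rootsum_zero hz hzn
    have hre := congrArg Complex.re h
    rw [Complex.re_sum] at hre
    have heq : ∀ k ∈ Finset.range a,
        (Complex.exp (2 * ((π * m / a : ℝ):ℂ) * Complex.I) ^ k).re
          = Real.cos (2 * π * m * k / a) := by
      intro k _
      rw [zpow_eq, Complex.exp_ofReal_mul_I_re]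
      congr 1
      ring
    rw [Finset.sum_congr rfl heq] at hre
    simpa using hre

/-- sine orthogonality -/
lemma sin_orth (ha : 0 < a) (i : ℕ) (c : ℤ) :
    ∑ k ∈ Finset.range a, Real.sin (2*π*i*k/a) * Real.sin (2*π*c*k/a)
      = (if (a:ℤ) ∣ ((i:ℤ) - c) then (a:ℝ)/2 else 0)
        - (if (a:ℤ) ∣ ((i:ℤ) + c) then (a:ℝ)/2 else 0) := by
  set d₁ : ℤ := (i:ℤ) - c with hd1
  set d₂ : ℤ := (i:ℤ) + c with hd2
  have hpoint : ∀ k ∈ Finset.range a, Real.sin (2*π*i*k/a) * Real.sin (2*π*c*k/a)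
      = Real.cos (2*π*(d₁:ℝ)*k/a) / 2 - Real.cos (2*π*(d₂:ℝ)*k/a) / 2 := by
    intro k _
    have h1 : (2*π*(d₁:ℝ)*k/a : ℝ) = 2*π*i*k/a - 2*π*c*k/a := by
      rw [hd1]; push_cast; ring
    have h2 : (2*π*(d₂:ℝ)*k/a : ℝ) = 2*π*i*k/a + 2*π*c*k/a := by
      rw [hd2]; push_cast; ring
    rw [h1, h2, Real.cos_sub, Real.cos_add]
    ring
  rw [Finset.sum_congr rfl hpoint, Finset.sum_sub_distrib, ← Finset.sum_div, ← Finset.sum_div]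
  rw [cos_sum ha d₁, cos_sum ha d₂]
  split_ifs <;> ring

lemma emod_toNat_mem (ha : 0 < a) {c : ℤ} (hc : ¬ (a:ℤ) ∣ c) :
    (c % (a:ℤ)).toNat ∈ Finset.Ico 1 a := by
  have ha' : (0:ℤ) < a := by exact_mod_cast ha
  have h0 : 0 ≤ c % (a:ℤ) := Int.emod_nonneg _ (by positivity)
  have h1 : c % (a:ℤ) < a := Int.emod_lt_of_pos _ ha'
  have hne : c % (a:ℤ) ≠ 0 := fun h => hc (Int.dvd_of_emod_eq_zero h)
  rw [Finset.mem_Ico]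
  omega

/-- collapse a sum with a divisibility indicator (subtraction form) -/
lemma collapse (ha : 0 < a) {c : ℤ} (hc : ¬ (a:ℤ) ∣ c) (f : ℕ → ℝ) :
    ∑ i ∈ Finset.Ico 1 a, (if (a:ℤ) ∣ ((i:ℤ) - c) then f i else 0)
      = f ((c % (a:ℤ)).toNat) := by
  have ha' : (0:ℤ) < a := by exact_mod_cast ha
  have hmem := emod_toNat_mem ha hc
  have h0 : 0 ≤ c % (a:ℤ) := Int.emod_nonneg _ (by positivity)
  refine Finset.sum_eq_single_of_mem _ hmem ?_ |>.trans ?_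
  · intro i hi hne
    rw [if_neg]
    intro hdvd
    apply hne
    rw [Finset.mem_Ico] at hi
    obtain ⟨d, hd⟩ := hdvd
    -- i = c + a d, and i % a = i, so i = c % a
    have : (i:ℤ) % a = c % a := by
      have : (i:ℤ) = c + (a:ℤ) * d := by linarith [hd]
      rw [this, Int.add_mul_emod_self_left]
    have hi' : (i:ℤ) % a = i := Int.emod_eq_of_lt (by positivity) (by exact_mod_cast hi.2)
    omega
  · have hdvd : (a:ℤ) ∣ ((((c % (a:ℤ)).toNat : ℕ) : ℤ) - c) := by
      rw [Int.toNat_of_nonneg h0]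
      exact ⟨-(c / a), by linear_combination Int.mul_ediv_add_emod c (a:ℤ)⟩
    rw [if_pos hdvd]

lemma neg_emod_toNat (ha : 0 < a) {c : ℤ} (hc : ¬ (a:ℤ) ∣ c) :
    ((-c) % (a:ℤ)).toNat = a - (c % (a:ℤ)).toNat := by
  have ha' : (0:ℤ) < a := by exact_mod_cast ha
  have h0 : 0 ≤ c % (a:ℤ) := Int.emod_nonneg _ (by positivity)
  have h1 : c % (a:ℤ) < a := Int.emod_lt_of_pos _ ha'
  have hne : c % (a:ℤ) ≠ 0 := fun h => hc (Int.dvd_of_emod_eq_zero h)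
  have hrw : -c = ((a:ℤ) - c % a) + (a:ℤ) * (-1 - c / a) := by
    have := Int.mul_ediv_add_emod c (a:ℤ)
    linarith
  rw [hrw, Int.add_mul_emod_self_left,
    Int.emod_eq_of_lt (by omega) (by omega)]
  omega

lemma collapse' (ha : 0 < a) {c : ℤ} (hc : ¬ (a:ℤ) ∣ c) (f : ℕ → ℝ) :
    ∑ i ∈ Finset.Ico 1 a, (if (a:ℤ) ∣ ((i:ℤ) + c) then f i else 0)
      = f (a - (c % (a:ℤ)).toNat) := by
  have hc' : ¬ (a:ℤ) ∣ (-c) := fun h => hc ((dvd_neg).mp h)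
  have h := collapse ha hc' f
  rw [neg_emod_toNat ha hc] at h
  rw [← h]
  refine Finset.sum_congr rfl fun i _ => ?_
  congr 1
  rw [sub_neg_eq_add]

end analytic
-- backward direction
lemma four_T_of_dvd {a : ℕ} (ha : 0 < a) {b : ℤ} (hab : IsCoprime (a:ℤ) b)
    (hdvd : (a:ℤ) ∣ b^2 + 1) :
    4 * ∑ k ∈ Finset.Ico 1 a, (k:ℤ) * ((b * k) % (a:ℤ)) = a^2 * (a - 1) := by
  set T := ∑ k ∈ Finset.Ico 1 a, (k:ℤ) * ((b * k) % (a:ℤ)) with hT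
  have ha' : (0:ℤ) < a := by exact_mod_cast ha
  obtain ⟨m, hm⟩ := hdvd
  have hperm := perm_sum ha hab (fun x => x * ((b * x) % (a:ℤ)))
  have hpoint : ∀ k ∈ Finset.Ico 1 a,
      ((b * k) % (a:ℤ)) * ((b * ((b * k) % (a:ℤ))) % (a:ℤ))
        = ((b * k) % (a:ℤ)) * ((a:ℤ) - k) := by
    intro k hk
    rw [Finset.mem_Ico] at hk
    congr 1
    have h1 : (b * ((b * k) % (a:ℤ))) % (a:ℤ) = (b * (b * k)) % a := by
      conv_lhs => rw [Int.mul_emod, Int.emod_emod_of_dvd (b*k) dvd_rfl]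
      conv_rhs => rw [Int.mul_emod]
    have h2 : b * (b * k) = ((a:ℤ) - k) + a * (m * k - 1) := by
      have hb2 : b^2 = a * m - 1 := by linarith [hm]
      calc b * (b * k) = b^2 * k := by ring
        _ = ((a:ℤ) - k) + a * (m * k - 1) := by rw [hb2]; ring
    rw [h1, h2, Int.add_mul_emod_self_left]
    exact Int.emod_eq_of_lt (by omega) (by omega)
  have hsum1 := perm_sum ha hab (fun x => x)
  have h2sum : 2 * ∑ k ∈ Finset.Ico 1 a, (k:ℤ) = a * (a-1) := two_id_sum a
  -- T = Σ ((b*k)%a) * (a - k)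
  have hrw : T = ∑ k ∈ Finset.Ico 1 a, ((b * k) % (a:ℤ)) * ((a:ℤ) - k) := by
    conv_lhs => rw [hT, ← hperm]
    exact Finset.sum_congr rfl hpoint
  have hsplit : ∑ k ∈ Finset.Ico 1 a, ((b * k) % (a:ℤ)) * ((a:ℤ) - k)
      = (a:ℤ) * (∑ k ∈ Finset.Ico 1 a, ((b * k) % (a:ℤ))) - T := by
    rw [hT, Finset.mul_sum, ← Finset.sum_sub_distrib]
    exact Finset.sum_congr rfl fun k _ => by ring
  rw [hsplit] at hrw
  rw [hsum1] at hrw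
  -- hrw : T = a * Σ k - T
  have h2T : 2 * T = (a:ℤ) * ∑ k ∈ Finset.Ico 1 a, (k:ℤ) := by linarith
  have h4 : 4 * T = (a:ℤ) * (2 * ∑ k ∈ Finset.Ico 1 a, (k:ℤ)) := by linarith
  rw [h4, h2sum]
  ring
  
lemma dvd_of_four_T {a : ℕ} (ha : 0 < a) {b : ℤ} (hab : IsCoprime (a:ℤ) b)
    (h4T : 4 * ∑ k ∈ Finset.Ico 1 a, (k:ℤ) * ((b * k) % (a:ℤ)) = a^2 * (a - 1)) :
    (a:ℤ) ∣ b^2 + 1 := by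
  set T := ∑ k ∈ Finset.Ico 1 a, (k:ℤ) * ((b * k) % (a:ℤ)) with hT
  have ha' : (0:ℤ) < a := by exact_mod_cast ha
  set Q := ∑ k ∈ Finset.Ico 1 a, (k:ℤ)^2 with hQ
  set F := ∑ k ∈ Finset.Ico 1 a, ((b*k)/(a:ℤ))^2 with hF
  set K := ∑ k ∈ Finset.Ico 1 a, (k:ℤ) * ((b*k)/(a:ℤ)) with hK
  have hr2 : ∑ k ∈ Finset.Ico 1 a, ((b * k) % (a:ℤ))^2 = Q := by
    rw [hQ]
    have := perm_sum ha hab (fun x => x^2)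
    simpa using this
  have h1 : b^2*Q - 2*(a:ℤ)*b*K + a^2*F = Q := by
    have e : ∀ k ∈ Finset.Ico 1 a, ((b * k) % (a:ℤ))^2
        = b^2*(k:ℤ)^2 - 2*(a:ℤ)*b*((k:ℤ)*((b*k)/(a:ℤ))) + (a:ℤ)^2*((b*k)/(a:ℤ))^2 :=
      fun k _ => by rw [Int.emod_def]; ring
    have e2 := Finset.sum_congr rfl e
    rw [hr2, Finset.sum_add_distrib, Finset.sum_sub_distrib,
      ← Finset.mul_sum, ← Finset.mul_sum, ← Finset.mul_sum] at e2
    rw [← hQ, ← hF, ← hK] at e2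
    linarith
  have hTval : T = b*Q - (a:ℤ)*K := by
    have e : ∀ k ∈ Finset.Ico 1 a, (k:ℤ) * ((b * k) % (a:ℤ))
        = b*(k:ℤ)^2 - (a:ℤ)*((k:ℤ)*((b*k)/(a:ℤ))) :=
      fun k _ => by rw [Int.emod_def]; ring
    have e2 := Finset.sum_congr rfl e
    rw [Finset.sum_sub_distrib, ← Finset.mul_sum, ← Finset.mul_sum] at e2
    rw [← hQ, ← hK, ← hT] at e2
    exact e2
  have h6Q : 6 * Q = (a:ℤ) * (a-1) * (2*a-1) := six_sq_sum a
  -- 2bT = (b²+1)Q - a²F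
  have h2bT : 2*b*T = (b^2+1)*Q - (a:ℤ)^2*F := by
    linear_combination 2*b*hTval + h1
  -- combine with 4T = a²(a-1)
  have hkey : (b^2+1) * (((a:ℤ)-1) * (2*a-1)) = (a:ℤ) * (3*b*(a-1) + 6*F) := by
    apply mul_left_cancel₀ (ne_of_gt ha')
    have e1 : 12*b*T = 3*b*((a:ℤ)^2*(a-1)) := by linear_combination 3*b*h4T
    have e2 : 12*b*T = (b^2+1)*(6*Q) - 6*(a:ℤ)^2*F := by linear_combination 6*h2bT
    rw [h6Q] at e2
    linear_combination e1 - e2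
  have hdvd : (a:ℤ) ∣ (b^2+1) * (((a:ℤ)-1) * (2*a-1)) := ⟨_, hkey⟩
  have hco : IsCoprime (a:ℤ) (((a:ℤ)-1) * (2*a-1)) :=
    ⟨-(2*(a:ℤ)-3), 1, by ring⟩
  exact hco.dvd_of_dvd_mul_right hdvd

set_option maxHeartbeats 1000000 in
lemma main_identity {a : ℕ} (ha : 0 < a) {b : ℤ} (hab : IsCoprime (a:ℤ) b) :
    dedekindSum a b
      = ((∑ k ∈ Finset.Ico 1 a, (k:ℤ) * ((b * k) % (a:ℤ)) : ℤ) : ℝ) / (a:ℝ)^2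
        - ((a:ℝ) - 1) / 4 := by
  have ha' : (0:ℤ) < a := by exact_mod_cast ha
  have haR : (a:ℝ) ≠ 0 := Nat.cast_ne_zero.mpr ha.ne'
  have hknd : ∀ k ∈ Finset.Ico 1 a, ¬ (a:ℤ) ∣ (k:ℤ) := by
    intro k hk hdvd
    rw [Finset.mem_Ico] at hk
    have h1 : (1:ℤ) ≤ k := by exact_mod_cast hk.1
    have h2 : (k:ℤ) < a := by exact_mod_cast hk.2
    have := Int.le_of_dvd (by omega) hdvd
    omega
  have hbknd : ∀ k ∈ Finset.Ico 1 a, ¬ (a:ℤ) ∣ (b * (k:ℤ)) := by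
    intro k hk hdvd
    exact hknd k hk (hab.dvd_of_dvd_mul_left hdvd)
  have hcot1 : ∀ k ∈ Finset.Ico 1 a, Real.cot (π * k / a)
      = (∑ i ∈ Finset.Ico 1 a, ((a:ℝ) - 2*i) * Real.sin (2 * π * i * k / a)) / a := by
    intro k hk
    have h := cotexp ha (hknd k hk)
    push_cast at h
    rw [eq_div_iff haR]
    linarith [h]
  have hcot2 : ∀ k ∈ Finset.Ico 1 a, Real.cot (π * b * k / a)
      = (∑ j ∈ Finset.Ico 1 a, ((a:ℝ) - 2*j) * Real.sin (2 * π * j * ((b:ℝ) * k) / a)) / a := by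
    intro k hk
    have h := cotexp ha (hbknd k hk)
    push_cast at h
    have harg : π * ((b:ℝ) * k) / a = π * (b:ℝ) * k / a := by ring
    rw [harg] at h
    rw [eq_div_iff haR]
    linarith [h]
  have hS1 : ∑ k ∈ Finset.Ico 1 a, Real.cot (π * k / a) * Real.cot (π * b * k / a)
      = (1/(a:ℝ)^2) * ∑ k ∈ Finset.Ico 1 a, ∑ i ∈ Finset.Ico 1 a, ∑ j ∈ Finset.Ico 1 a,
        ((((a:ℝ) - 2*i) * Real.sin (2 * π * i * k / a)) *
         (((a:ℝ) - 2*j) * Real.sin (2 * π * j * ((b:ℝ) * k) / a))) := by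
    rw [Finset.mul_sum]
    refine Finset.sum_congr rfl fun k hk => ?_
    rw [hcot1 k hk, hcot2 k hk, div_mul_div_comm, Finset.sum_mul_sum]
    ring
  have hS2 : ∑ k ∈ Finset.Ico 1 a, ∑ i ∈ Finset.Ico 1 a, ∑ j ∈ Finset.Ico 1 a,
        ((((a:ℝ) - 2*i) * Real.sin (2 * π * i * k / a)) *
         (((a:ℝ) - 2*j) * Real.sin (2 * π * j * ((b:ℝ) * k) / a)))
      = ∑ j ∈ Finset.Ico 1 a, ∑ i ∈ Finset.Ico 1 a, ∑ k ∈ Finset.Ico 1 a,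
        ((((a:ℝ) - 2*i) * Real.sin (2 * π * i * k / a)) *
         (((a:ℝ) - 2*j) * Real.sin (2 * π * j * ((b:ℝ) * k) / a))) := by
    calc ∑ k ∈ Finset.Ico 1 a, ∑ i ∈ Finset.Ico 1 a, ∑ j ∈ Finset.Ico 1 a, ((((a:ℝ) - 2*i) * Real.sin (2 * π * i * k / a)) *
         (((a:ℝ) - 2*j) * Real.sin (2 * π * j * ((b:ℝ) * k) / a)))
        = ∑ i ∈ Finset.Ico 1 a, ∑ k ∈ Finset.Ico 1 a, ∑ j ∈ Finset.Ico 1 a, ((((a:ℝ) - 2*i) * Real.sin (2 * π * i * k / a)) *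
         (((a:ℝ) - 2*j) * Real.sin (2 * π * j * ((b:ℝ) * k) / a))) :=
          Finset.sum_comm
      _ = ∑ i ∈ Finset.Ico 1 a, ∑ j ∈ Finset.Ico 1 a, ∑ k ∈ Finset.Ico 1 a, ((((a:ℝ) - 2*i) * Real.sin (2 * π * i * k / a)) *
         (((a:ℝ) - 2*j) * Real.sin (2 * π * j * ((b:ℝ) * k) / a))) :=
          Finset.sum_congr rfl fun i _ => Finset.sum_comm
      _ = ∑ j ∈ Finset.Ico 1 a, ∑ i ∈ Finset.Ico 1 a, ∑ k ∈ Finset.Ico 1 a, ((((a:ℝ) - 2*i) * Real.sin (2 * π * i * k / a)) *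
         (((a:ℝ) - 2*j) * Real.sin (2 * π * j * ((b:ℝ) * k) / a))) :=
          Finset.sum_comm
  have hinner : ∀ j ∈ Finset.Ico 1 a, ∀ i ∈ Finset.Ico 1 a,
      ∑ k ∈ Finset.Ico 1 a, ((((a:ℝ) - 2*i) * Real.sin (2 * π * i * k / a)) *
         (((a:ℝ) - 2*j) * Real.sin (2 * π * j * ((b:ℝ) * k) / a)))
        = (((a:ℝ) - 2*i) * ((a:ℝ) - 2*j)) *
          ((if (a:ℤ) ∣ ((i:ℤ) - b*(j:ℤ)) then (a:ℝ)/2 else 0)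
            - (if (a:ℤ) ∣ ((i:ℤ) + b*(j:ℤ)) then (a:ℝ)/2 else 0)) := by
    intro j hj i hi
    have hsin2 : ∀ k : ℕ, Real.sin (2 * π * j * ((b:ℝ) * k) / a)
        = Real.sin (2*π*((b*(j:ℤ) : ℤ):ℝ)*k/a) := by
      intro k
      congr 1
      push_cast
      ring
    have hterm : ∀ k ∈ Finset.Ico 1 a, ((((a:ℝ) - 2*i) * Real.sin (2 * π * i * k / a)) *
         (((a:ℝ) - 2*j) * Real.sin (2 * π * j * ((b:ℝ) * k) / a)))
        = (((a:ℝ) - 2*i) * ((a:ℝ) - 2*j)) *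
          (Real.sin (2*π*i*k/a) * Real.sin (2*π*((b*(j:ℤ) : ℤ):ℝ)*k/a)) := by
      intro k _
      rw [hsin2 k]
      ring
    rw [Finset.sum_congr rfl hterm, ← Finset.mul_sum]
    congr 1
    have hext : ∑ k ∈ Finset.range a,
        (Real.sin (2*π*i*k/a) * Real.sin (2*π*((b*(j:ℤ) : ℤ):ℝ)*k/a))
        = ∑ k ∈ Finset.Ico 1 a,
        (Real.sin (2*π*i*k/a) * Real.sin (2*π*((b*(j:ℤ) : ℤ):ℝ)*k/a)) := by
      rw [Finset.range_eq_Ico, Finset.sum_eq_sum_Ico_succ_bot ha]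
      norm_num
    rw [← hext, sin_orth ha i (b*(j:ℤ))]
  have hstep4 : ∀ j ∈ Finset.Ico 1 a,
      ∑ i ∈ Finset.Ico 1 a, ((((a:ℝ) - 2*i) * ((a:ℝ) - 2*j)) *
          ((if (a:ℤ) ∣ ((i:ℤ) - b*(j:ℤ)) then (a:ℝ)/2 else 0)
            - (if (a:ℤ) ∣ ((i:ℤ) + b*(j:ℤ)) then (a:ℝ)/2 else 0)))
        = ((a:ℝ) - 2*j) * ((a:ℝ) * ((a:ℝ) - 2*(((b*(j:ℤ)) % (a:ℤ)).toNat : ℝ))) := by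
    intro j hj
    have hnd : ¬ (a:ℤ) ∣ (b*(j:ℤ)) := hbknd j hj
    have hmem := emod_toNat_mem ha hnd
    rw [Finset.mem_Ico] at hmem
    have hterm : ∀ i ∈ Finset.Ico 1 a, ((((a:ℝ) - 2*i) * ((a:ℝ) - 2*j)) *
          ((if (a:ℤ) ∣ ((i:ℤ) - b*(j:ℤ)) then (a:ℝ)/2 else 0)
            - (if (a:ℤ) ∣ ((i:ℤ) + b*(j:ℤ)) then (a:ℝ)/2 else 0)))
        = ((a:ℝ) - 2*j) *
          ((if (a:ℤ) ∣ ((i:ℤ) - b*(j:ℤ)) then ((a:ℝ) - 2*i) * ((a:ℝ)/2) else 0)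
            - (if (a:ℤ) ∣ ((i:ℤ) + b*(j:ℤ)) then ((a:ℝ) - 2*i) * ((a:ℝ)/2) else 0)) := by
      intro i _
      split_ifs <;> ring
    rw [Finset.sum_congr rfl hterm, ← Finset.mul_sum, Finset.sum_sub_distrib,
      collapse ha hnd (fun i => ((a:ℝ) - 2*i) * ((a:ℝ)/2)),
      collapse' ha hnd (fun i => ((a:ℝ) - 2*i) * ((a:ℝ)/2))]
    have hle : ((b*(j:ℤ)) % (a:ℤ)).toNat ≤ a := by omega
    push_cast [Nat.cast_sub hle]
    ring
  have hP : ∑ j ∈ Finset.Ico 1 a,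
      (((a:ℝ) - 2*j) * ((a:ℝ) * ((a:ℝ) - 2*(((b*(j:ℤ)) % (a:ℤ)).toNat : ℝ))))
      = (a:ℝ) * ((∑ j ∈ Finset.Ico 1 a,
          ((a:ℤ) - 2*(j:ℤ)) * ((a:ℤ) - 2*((b*j) % (a:ℤ))) : ℤ) : ℝ) := by
    rw [Int.cast_sum, Finset.mul_sum]
    refine Finset.sum_congr rfl fun j hj => ?_
    have h0 : 0 ≤ (b*(j:ℤ)) % (a:ℤ) := Int.emod_nonneg _ (by positivity)
    have hcast : ((((b*(j:ℤ)) % (a:ℤ)).toNat : ℕ) : ℝ) = (((b*(j:ℤ)) % (a:ℤ) : ℤ) : ℝ) := by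
      exact_mod_cast congrArg (Int.cast : ℤ → ℝ) (Int.toNat_of_nonneg h0)
    rw [hcast]
    push_cast
    ring
  have hPval : (∑ j ∈ Finset.Ico 1 a, ((a:ℤ) - 2*(j:ℤ)) * ((a:ℤ) - 2*((b*j) % (a:ℤ))) : ℤ)
      = 4 * (∑ k ∈ Finset.Ico 1 a, (k:ℤ) * ((b * k) % (a:ℤ))) - (a:ℤ)^2*((a:ℤ)-1) := by
    have hexp : ∀ j ∈ Finset.Ico 1 a, ((a:ℤ) - 2*(j:ℤ)) * ((a:ℤ) - 2*((b*j) % (a:ℤ)))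
        = (a:ℤ)*(a:ℤ) - 2*(a:ℤ)*((b*j) % (a:ℤ)) - 2*(a:ℤ)*(j:ℤ)
          + 4*((j:ℤ)*((b*j) % (a:ℤ))) := fun j _ => by ring
    rw [Finset.sum_congr rfl hexp, Finset.sum_add_distrib, Finset.sum_sub_distrib,
      Finset.sum_sub_distrib, Finset.sum_const, ← Finset.mul_sum, ← Finset.mul_sum,
      ← Finset.mul_sum, Nat.card_Ico, nsmul_eq_mul]
    have hperm := perm_sum ha hab (fun x : ℤ => x)
    have h2 := two_id_sum a
    have hcard : ((a - 1 : ℕ) : ℤ) = (a:ℤ) - 1 := by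
      have : 1 ≤ a := ha
      push_cast [Nat.cast_sub this]
      ring
    rw [hcard]
    linear_combination (-2*(a:ℤ))*hperm + (-2*(a:ℤ))*h2
  -- final assembly
  unfold dedekindSum
  rw [hS1, hS2]
  rw [Finset.sum_congr rfl (fun j hj => Finset.sum_congr rfl (fun i hi => hinner j hj i hi))]
  rw [Finset.sum_congr rfl hstep4, hP, hPval]
  push_cast
  field_simp

theorem dedekindSum_eq_zero_iff (a : ℕ) (ha : 0 < a) (b : ℤ)
    (hab : IsCoprime (a : ℤ) b) :
    dedekindSum a b = 0 ↔ (a : ℤ) ∣ b ^ 2 + 1 := by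
  have hid := main_identity ha hab
  have haR : (a:ℝ) ≠ 0 := Nat.cast_ne_zero.mpr ha.ne'
  constructor
  · intro h0
    rw [hid] at h0
    have h4 : ((4 * ∑ k ∈ Finset.Ico 1 a, (k:ℤ) * ((b * k) % (a:ℤ)) : ℤ) : ℝ)
        = (((a:ℤ)^2 * ((a:ℤ) - 1) : ℤ) : ℝ) := by
      push_cast
      field_simp at h0
      push_cast at h0
      linarith
    exact dvd_of_four_T ha hab (by exact_mod_cast h4)
  · intro hdvd
    have h4 := four_T_of_dvd ha hab hdvd
    rw [hid]
    have h4R : 4 * ((∑ k ∈ Finset.Ico 1 a, (k:ℤ) * ((b * k) % (a:ℤ)) : ℤ) : ℝ)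
        = (a:ℝ)^2 * ((a:ℝ) - 1) := by exact_mod_cast congrArg (Int.cast : ℤ → ℝ) h4
    have hT : ((∑ k ∈ Finset.Ico 1 a, (k:ℤ) * ((b * k) % (a:ℤ)) : ℤ) : ℝ)
        = (a:ℝ)^2 * ((a:ℝ) - 1) / 4 := by linarith
    rw [hT]
    field_simp
    ring
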